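/- arXiv:2409.17138 — 8 statements merged into one kernel-verified Lean document; each statement's English description precedes it below -/
import Mathlib

section
/- Let {X_t}_{t=1}^T and {Y_t}_{t=1}^T be nonnegative real sequences satisfying |X_t - Y_t| ≤ M_g · Σ_{k=t+1}^T X_k² for all t, with X_T = Y_T and X_t, Y_t ≤ G for all t, where M_g > 0 and G > 0. Then Σ_{t=1}^T X_t² ≤ max{e, 4e·M_g²·G²·T²} · Σ_{t=1}^T Y_t². -/
open Finset

set_option maxHeartbeats 1000000 in
/-- Case B core: if `Mg² T R ≤ 1/(4e)` where `R = ∑ Y²`, then `∑ X² ≤ e ∑ Y²`. -/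
theorem sequence_lemma_small (T : ℕ) (hT : 1 ≤ T) (Mg : ℝ) (hMg : 0 < Mg)
    (X Y : ℕ → ℝ)
    (hXnn : ∀ t ∈ Finset.Icc 1 T, 0 ≤ X t) (hYnn : ∀ t ∈ Finset.Icc 1 T, 0 ≤ Y t)
    (hseq : ∀ t ∈ Finset.Icc 1 T,
      |X t - Y t| ≤ Mg * ∑ k ∈ Finset.Icc (t + 1) T, (X k) ^ 2)
    (hTeq : X T = Y T)
    (hsmall : Mg ^ 2 * T * (∑ t ∈ Finset.Icc 1 T, (Y t) ^ 2) ≤ 1 / (4 * Real.exp 1)) :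
    ∑ t ∈ Finset.Icc 1 T, (X t) ^ 2 ≤ Real.exp 1 * ∑ t ∈ Finset.Icc 1 T, (Y t) ^ 2 := by
  set e1 : ℝ := Real.exp 1 with he1
  have he1pos : (0:ℝ) < e1 := Real.exp_pos 1
  have he1two : (2:ℝ) ≤ e1 := by
    rw [he1]; have := Real.add_one_le_exp (1:ℝ); linarith
  set Rtot : ℝ := ∑ t ∈ Finset.Icc 1 T, (Y t) ^ 2 with hRtotdef
  have hRnn : 0 ≤ Rtot := Finset.sum_nonneg fun i _ => sq_nonneg _
  set c0 : ℝ := e1 * Mg ^ 2 * Rtot with hc0def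
  have hc0nn : 0 ≤ c0 := by positivity
  set S : ℕ → ℝ := fun t => ∑ k ∈ Finset.Icc t T, (X k) ^ 2 with hSdef
  set RR : ℕ → ℝ := fun t => ∑ k ∈ Finset.Icc t T, (Y k) ^ 2 with hRRdef
  set K : ℕ → ℝ := fun t => ∏ k ∈ Finset.Ico t T, (1 + (2 * Mg * Y k + c0)) with hKdef
  have hSapp : ∀ t, S t = ∑ k ∈ Finset.Icc t T, (X k) ^ 2 := fun t => by rw [hSdef]
  have hRRapp : ∀ t, RR t = ∑ k ∈ Finset.Icc t T, (Y k) ^ 2 := fun t => by rw [hRRdef]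
  have hKapp : ∀ t, K t = ∏ k ∈ Finset.Ico t T, (1 + (2 * Mg * Y k + c0)) :=
    fun t => by rw [hKdef]
  have hfacnn : ∀ k ∈ Finset.Ico 1 T, (1:ℝ) ≤ 1 + (2 * Mg * Y k + c0) := by
    intro k hk
    rw [Finset.mem_Ico] at hk
    have hY : 0 ≤ Y k := hYnn k (Finset.mem_Icc.mpr ⟨hk.1, le_of_lt hk.2⟩)
    nlinarith
  have hKone : ∀ t, 1 ≤ t → 1 ≤ K t := by
    intro t ht
    rw [hKapp]
    have h1 : ∏ k ∈ Finset.Ico t T, (1:ℝ) ≤ ∏ k ∈ Finset.Ico t T, (1 + (2 * Mg * Y k + c0)) := by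
      apply Finset.prod_le_prod
      · intro k hk; exact zero_le_one
      · intro k hk
        rw [Finset.mem_Ico] at hk
        exact hfacnn k (Finset.mem_Ico.mpr ⟨le_trans ht hk.1, hk.2⟩)
    simpa using h1
  -- sum of Y over Icc 1 T
  have hQnn : 0 ≤ ∑ k ∈ Finset.Icc 1 T, Y k := Finset.sum_nonneg fun i hi => hYnn i hi
  have hCS : (∑ k ∈ Finset.Icc 1 T, Y k) ^ 2 ≤ (T:ℝ) * Rtot := by
    have := sq_sum_le_card_mul_sum_sq (s := Finset.Icc 1 T) (f := Y)
    simpa [Nat.card_Icc, hRtotdef] using this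
  have hE : Mg ^ 2 * T * Rtot * (4 * e1) ≤ 1 := by
    rw [le_div_iff₀ (by positivity)] at hsmall
    exact hsmall
  have hQbound : 2 * Mg * (∑ k ∈ Finset.Icc 1 T, Y k) ≤ 3 / 4 := by
    have h1 : (2 * Mg * (∑ k ∈ Finset.Icc 1 T, Y k)) ^ 2 ≤ 4 * (Mg ^ 2 * T * Rtot) := by
      nlinarith [hCS, sq_nonneg Mg]
    have h4 : 0 ≤ 2 * Mg * (∑ k ∈ Finset.Icc 1 T, Y k) := by positivity
    have hA : (2 * Mg * (∑ k ∈ Finset.Icc 1 T, Y k)) ^ 2 * e1 ≤ 1 := by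
      nlinarith [mul_le_mul_of_nonneg_left h1 (le_of_lt he1pos)]
    have hB : (2 * Mg * (∑ k ∈ Finset.Icc 1 T, Y k)) ^ 2 ≤ 1 / 2 := by
      nlinarith [sq_nonneg (2 * Mg * (∑ k ∈ Finset.Icc 1 T, Y k))]
    nlinarith
  have hc0T : (T:ℝ) * c0 ≤ 1 / 4 := by
    rw [hc0def]; nlinarith [hE]
  have hKe : ∀ t, 1 ≤ t → K t ≤ e1 := by
    intro t ht
    rw [hKapp]
    have hstep : ∏ k ∈ Finset.Ico t T, (1 + (2 * Mg * Y k + c0)) ≤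
        ∏ k ∈ Finset.Ico t T, Real.exp (2 * Mg * Y k + c0) := by
      apply Finset.prod_le_prod
      · intro k hk
        rw [Finset.mem_Ico] at hk
        have := hfacnn k (Finset.mem_Ico.mpr ⟨le_trans ht hk.1, hk.2⟩)
        linarith
      · intro k hk
        have := Real.add_one_le_exp (2 * Mg * Y k + c0)
        linarith
    have hexp : ∏ k ∈ Finset.Ico t T, Real.exp (2 * Mg * Y k + c0) =
        Real.exp (∑ k ∈ Finset.Ico t T, (2 * Mg * Y k + c0)) := by
      rw [Real.exp_sum]
    have hsub : ∑ k ∈ Finset.Ico t T, (2 * Mg * Y k + c0) ≤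
        ∑ k ∈ Finset.Ico 1 T, (2 * Mg * Y k + c0) := by
      apply Finset.sum_le_sum_of_subset_of_nonneg
      · exact Finset.Ico_subset_Ico ht le_rfl
      · intro k hk _
        rw [Finset.mem_Ico] at hk
        have hY : 0 ≤ Y k := hYnn k (Finset.mem_Icc.mpr ⟨hk.1, le_of_lt hk.2⟩)
        positivity
    have hsum1 : ∑ k ∈ Finset.Ico 1 T, (2 * Mg * Y k + c0) ≤ 1 := by
      rw [Finset.sum_add_distrib, Finset.sum_const, Nat.card_Ico, nsmul_eq_mul]
      have hYsub : ∑ k ∈ Finset.Ico 1 T, (2 * Mg * Y k) ≤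
          ∑ k ∈ Finset.Icc 1 T, (2 * Mg * Y k) := by
        apply Finset.sum_le_sum_of_subset_of_nonneg
        · intro k hk; rw [Finset.mem_Ico] at hk
          exact Finset.mem_Icc.mpr ⟨hk.1, le_of_lt hk.2⟩
        · intro k hk _
          have hY : 0 ≤ Y k := hYnn k hk
          positivity
      have h1 : ∑ k ∈ Finset.Icc 1 T, (2 * Mg * Y k) =
          2 * Mg * ∑ k ∈ Finset.Icc 1 T, Y k := by
        rw [Finset.mul_sum]
      have hcard : ((T - 1 : ℕ) : ℝ) * c0 ≤ (T:ℝ) * c0 := by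
        apply mul_le_mul_of_nonneg_right _ hc0nn
        exact_mod_cast Nat.sub_le T 1
      rw [h1] at hYsub
      linarith [hYsub, hcard, hc0T, hQbound]
    calc ∏ k ∈ Finset.Ico t T, (1 + (2 * Mg * Y k + c0))
        ≤ Real.exp (∑ k ∈ Finset.Ico t T, (2 * Mg * Y k + c0)) := by rw [← hexp]; exact hstep
      _ ≤ Real.exp 1 := Real.exp_le_exp.mpr (le_trans hsub hsum1)
      _ = e1 := by rw [he1]
  -- main downward induction
  have main : ∀ n : ℕ, ∀ t : ℕ, 1 ≤ t → t ≤ T → T - t = n → S t ≤ K t * RR t := by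
    intro n
    induction n with
    | zero =>
      intro t ht1 htT hn
      have htT' : t = T := by omega
      subst htT'
      have hS : S t = X t ^ 2 := by rw [hSapp, Finset.Icc_self, Finset.sum_singleton]
      have hR : RR t = Y t ^ 2 := by rw [hRRapp, Finset.Icc_self, Finset.sum_singleton]
      have hK : K t = 1 := by rw [hKapp, Finset.Ico_self, Finset.prod_empty]
      rw [hS, hR, hK, hTeq, one_mul]
    | succ n ih =>
      intro t ht1 htT hn
      have htlt : t < T := by omega
      have hIH : S (t + 1) ≤ K (t + 1) * RR (t + 1) := ih (t + 1) (by omega) (by omega) (by omega)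
      have htmem : t ∈ Finset.Icc 1 T := Finset.mem_Icc.mpr ⟨ht1, le_of_lt htlt⟩
      have hYt : 0 ≤ Y t := hYnn t htmem
      have hXt : 0 ≤ X t := hXnn t htmem
      -- decompositions
      have hIccdec : Finset.Icc t T = insert t (Finset.Icc (t + 1) T) := by
        rw [Finset.Icc_add_one_left_eq_Ioc]
        exact (Finset.Ioc_insert_left (le_of_lt htlt)).symm
      have hnotmem : t ∉ Finset.Icc (t + 1) T := by
        simp [Finset.mem_Icc]
      have hSdec : S t = X t ^ 2 + S (t + 1) := by
        rw [hSapp, hSapp, hIccdec, Finset.sum_insert hnotmem]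
      have hRdec : RR t = Y t ^ 2 + RR (t + 1) := by
        rw [hRRapp, hRRapp, hIccdec, Finset.sum_insert hnotmem]
      have hIcodec : Finset.Ico t T = insert t (Finset.Ico (t + 1) T) := by
        rw [Finset.Ico_add_one_left_eq_Ioo]
        exact (Finset.Ioo_insert_left htlt).symm
      have hnotmem' : t ∉ Finset.Ico (t + 1) T := by
        simp [Finset.mem_Ico]
      have hKdec : K t = (1 + (2 * Mg * Y t + c0)) * K (t + 1) := by
        rw [hKapp, hKapp, hIcodec, Finset.prod_insert hnotmem']
      -- bounds
      have hS'nn : 0 ≤ S (t + 1) := by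
        rw [hSapp]; exact Finset.sum_nonneg fun i _ => sq_nonneg _
      have hRR'nn : 0 ≤ RR (t + 1) := by
        rw [hRRapp]; exact Finset.sum_nonneg fun i _ => sq_nonneg _
      have hRR'le : RR (t + 1) ≤ Rtot := by
        rw [hRRapp, hRtotdef]
        apply Finset.sum_le_sum_of_subset_of_nonneg
        · exact Finset.Icc_subset_Icc (by omega) le_rfl
        · intro k _ _; exact sq_nonneg _
      have hK'one : 1 ≤ K (t + 1) := hKone (t + 1) (by omega)
      have hK'e : K (t + 1) ≤ e1 := hKe (t + 1) (by omega)
      have hS'le : S (t + 1) ≤ e1 * Rtot := by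
        calc S (t + 1) ≤ K (t + 1) * RR (t + 1) := hIH
          _ ≤ e1 * Rtot :=
            mul_le_mul hK'e hRR'le hRR'nn (le_of_lt he1pos)
      have hXle : X t ≤ Y t + Mg * S (t + 1) := by
        have := hseq t htmem
        rw [abs_le] at this
        have h := this.2
        rw [hSapp]
        linarith
      have hXsq : X t ^ 2 ≤ (Y t + Mg * S (t + 1)) ^ 2 := by
        apply pow_le_pow_left₀ hXt hXle
      have hMgsq : Mg ^ 2 * S (t + 1) ^ 2 ≤ c0 * S (t + 1) := by
        have h := mul_le_mul_of_nonneg_left hS'le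
          (mul_nonneg (sq_nonneg Mg) hS'nn)
        rw [hc0def]; nlinarith
      have hfac1 : (1:ℝ) ≤ 1 + (2 * Mg * Y t + c0) := by
        have h0 : 0 ≤ 2 * Mg * Y t := by positivity
        linarith
      have hfprod : (1:ℝ) ≤ (1 + (2 * Mg * Y t + c0)) * K (t + 1) := by
        nlinarith [hfac1, hK'one]
      calc S t = X t ^ 2 + S (t + 1) := hSdec
        _ ≤ (Y t + Mg * S (t + 1)) ^ 2 + S (t + 1) := by linarith
        _ = Y t ^ 2 + 2 * Mg * Y t * S (t + 1) + Mg ^ 2 * S (t + 1) ^ 2 + S (t + 1) := by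
            ring
        _ ≤ Y t ^ 2 + (1 + (2 * Mg * Y t + c0)) * S (t + 1) := by nlinarith
        _ ≤ Y t ^ 2 + (1 + (2 * Mg * Y t + c0)) * (K (t + 1) * RR (t + 1)) := by
            have := mul_le_mul_of_nonneg_left hIH (le_trans zero_le_one hfac1)
            linarith
        _ ≤ (1 + (2 * Mg * Y t + c0)) * K (t + 1) * (Y t ^ 2 + RR (t + 1)) := by
            nlinarith [hfprod, sq_nonneg (Y t)]
        _ = K t * RR t := by rw [hKdec, hRdec]
  have h1T : S 1 ≤ K 1 * RR 1 := main (T - 1) 1 le_rfl hT (by omega)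
  have hfin : S 1 ≤ e1 * Rtot := by
    calc S 1 ≤ K 1 * RR 1 := h1T
      _ ≤ e1 * Rtot := by
        have hRR1 : RR 1 = Rtot := by rw [hRRapp, hRtotdef]
        rw [hRR1]
        exact mul_le_mul_of_nonneg_right (hKe 1 le_rfl) hRnn
  rw [hSapp] at hfin
  exact hfin

set_option maxHeartbeats 1000000 in
/-- **Sequence lemma.** If nonnegative sequences `X, Y` on `{1, …, T}` satisfy
`|X t - Y t| ≤ M_g * ∑_{k=t+1}^T X k ^ 2`, `X T = Y T`, and `X t, Y t ≤ G`, then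
`∑_{t=1}^T X t ^ 2 ≤ max {e, 4 e M_g² G² T²} * ∑_{t=1}^T Y t ^ 2`. -/
theorem sequence_lemma (T : ℕ) (hT : 1 ≤ T) (Mg G : ℝ) (hMg : 0 < Mg) (hG : 0 < G)
    (X Y : ℕ → ℝ)
    (hXnn : ∀ t ∈ Finset.Icc 1 T, 0 ≤ X t) (hYnn : ∀ t ∈ Finset.Icc 1 T, 0 ≤ Y t)
    (hXG : ∀ t ∈ Finset.Icc 1 T, X t ≤ G) (hYG : ∀ t ∈ Finset.Icc 1 T, Y t ≤ G)
    (hseq : ∀ t ∈ Finset.Icc 1 T,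
      |X t - Y t| ≤ Mg * ∑ k ∈ Finset.Icc (t + 1) T, (X k) ^ 2)
    (hTeq : X T = Y T) :
    ∑ t ∈ Finset.Icc 1 T, (X t) ^ 2 ≤
      max (Real.exp 1) (4 * Real.exp 1 * Mg ^ 2 * G ^ 2 * (T : ℝ) ^ 2) *
        ∑ t ∈ Finset.Icc 1 T, (Y t) ^ 2 := by
  set e1 : ℝ := Real.exp 1 with he1
  have he1pos : (0:ℝ) < e1 := Real.exp_pos 1
  have hRnn : 0 ≤ ∑ t ∈ Finset.Icc 1 T, (Y t) ^ 2 :=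
    Finset.sum_nonneg fun i _ => sq_nonneg _
  have hTpos : (0:ℝ) < (T:ℝ) := by exact_mod_cast hT
  by_cases hsmall : Mg ^ 2 * T * (∑ t ∈ Finset.Icc 1 T, (Y t) ^ 2) ≤ 1 / (4 * e1)
  · -- small case : bound by e
    have h := sequence_lemma_small T hT Mg hMg X Y hXnn hYnn hseq hTeq hsmall
    calc ∑ t ∈ Finset.Icc 1 T, (X t) ^ 2
        ≤ e1 * ∑ t ∈ Finset.Icc 1 T, (Y t) ^ 2 := h
      _ ≤ max e1 (4 * e1 * Mg ^ 2 * G ^ 2 * (T : ℝ) ^ 2) *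
            ∑ t ∈ Finset.Icc 1 T, (Y t) ^ 2 :=
          mul_le_mul_of_nonneg_right (le_max_left _ _) hRnn
  · -- big case : bound by 4 e Mg² G² T²
    push_neg at hsmall
    have hXbound : ∑ t ∈ Finset.Icc 1 T, (X t) ^ 2 ≤ (T:ℝ) * G ^ 2 := by
      calc ∑ t ∈ Finset.Icc 1 T, (X t) ^ 2 ≤ ∑ t ∈ Finset.Icc 1 T, G ^ 2 := by
            apply Finset.sum_le_sum
            intro i hi
            exact pow_le_pow_left₀ (hXnn i hi) (hXG i hi) 2
        _ = (T:ℝ) * G ^ 2 := by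
            rw [Finset.sum_const, Nat.card_Icc]
            simp
    have hkey : (T:ℝ) * G ^ 2 ≤
        4 * e1 * Mg ^ 2 * G ^ 2 * (T : ℝ) ^ 2 * ∑ t ∈ Finset.Icc 1 T, (Y t) ^ 2 := by
      have h1 : 1 / (4 * e1) < Mg ^ 2 * T * (∑ t ∈ Finset.Icc 1 T, (Y t) ^ 2) := hsmall
      have h2 : (1:ℝ) < 4 * e1 * (Mg ^ 2 * T * (∑ t ∈ Finset.Icc 1 T, (Y t) ^ 2)) := by
        rw [div_lt_iff₀ (by positivity)] at h1
        linarith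
      nlinarith [sq_nonneg G, mul_pos hTpos (mul_pos hG hG)]
    calc ∑ t ∈ Finset.Icc 1 T, (X t) ^ 2 ≤ (T:ℝ) * G ^ 2 := hXbound
      _ ≤ 4 * e1 * Mg ^ 2 * G ^ 2 * (T : ℝ) ^ 2 * ∑ t ∈ Finset.Icc 1 T, (Y t) ^ 2 := hkey
      _ ≤ max e1 (4 * e1 * Mg ^ 2 * G ^ 2 * (T : ℝ) ^ 2) *
            ∑ t ∈ Finset.Icc 1 T, (Y t) ^ 2 :=
          mul_le_mul_of_nonneg_right (le_max_right _ _) hRnn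
end

section
/- If f : X → ℝ is (α, μ)-gradient dominated over a convex compact set X (with α > 0, μ > 0), then f satisfies the KŁ condition on X with constant μ/α²: for all x ∈ X, f(x) - min_{y∈X} f(y) ≤ (α²/(2μ)) · min_{g ∈ N_X(x)} ‖∇f(x) + g‖². -/
open Set

/-- The normal cone of a set `X` at a point `x`. -/
def normalCone {n : ℕ} (X : Set (EuclideanSpace ℝ (Fin n))) (x : EuclideanSpace ℝ (Fin n)) :
    Set (EuclideanSpace ℝ (Fin n)) :=
  {g | ∀ y ∈ X, (inner ℝ g (y - x) : ℝ) ≤ 0}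

/-- **Gradient dominance implies the KŁ condition.** If `f` is `(α, μ)`-gradient dominated over
a convex compact set `X`, i.e. `f x - f* ≤ max_{x' ∈ X} (α ⟪∇f x, x - x'⟫ - μ/2 ‖x - x'‖²)`,
then `f` satisfies the KŁ condition on `X` with constant `μ / α²`. -/
theorem gradientDominance_implies_KL {n : ℕ} (X : Set (EuclideanSpace ℝ (Fin n)))
    (hXconv : Convex ℝ X) (hXcomp : IsCompact X) (hXne : X.Nonempty)
    (f : EuclideanSpace ℝ (Fin n) → ℝ) (f' : EuclideanSpace ℝ (Fin n) → EuclideanSpace ℝ (Fin n))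
    (α μ : ℝ) (hα : 0 < α) (hμ : 0 < μ)
    (hdiff : ∀ x ∈ X, HasGradientAt f (f' x) x)
    (hgd : ∀ x ∈ X, f x - sInf (f '' X) ≤
      sSup ((fun x' => α * (inner ℝ (f' x) (x - x') : ℝ) - μ / 2 * ‖x - x'‖ ^ 2) '' X)) :
    ∀ x ∈ X, f x - sInf (f '' X) ≤
      α ^ 2 / (2 * μ) * sInf ((fun g => ‖f' x + g‖ ^ 2) '' normalCone X x) := by
  intro x hx
  set v := f' x with hv
  set A := f x - sInf (f '' X) with hA
  have h0 : (0 : EuclideanSpace ℝ (Fin n)) ∈ normalCone X x := by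
    intro y hy
    simp
  have key : ∀ g ∈ normalCone X x, A ≤ α ^ 2 / (2 * μ) * ‖v + g‖ ^ 2 := by
    intro g hg
    refine (hgd x hx).trans ?_
    apply csSup_le (hXne.image _)
    rintro _ ⟨x', hx', rfl⟩
    have h1 : (inner ℝ g (x' - x) : ℝ) ≤ 0 := hg x' hx'
    have h1' : (inner ℝ g (x - x') : ℝ) ≥ 0 := by
      have : (inner ℝ g (x - x') : ℝ) = - inner ℝ g (x' - x) := by
        rw [← inner_neg_right]; congr 1; abel
      linarith [this]
    have h2 : (inner ℝ v (x - x') : ℝ) ≤ inner ℝ (v + g) (x - x') := by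
      rw [inner_add_left]; linarith
    have h3 : (inner ℝ (v + g) (x - x') : ℝ) ≤ ‖v + g‖ * ‖x - x'‖ :=
      real_inner_le_norm _ _
    have h4 : (inner ℝ v (x - x') : ℝ) ≤ ‖v + g‖ * ‖x - x'‖ := h2.trans h3
    have hn1 : (0 : ℝ) ≤ ‖v + g‖ := norm_nonneg _
    have hn2 : (0 : ℝ) ≤ ‖x - x'‖ := norm_nonneg _
    have hsq : (0 : ℝ) ≤ (μ * ‖x - x'‖ - α * ‖v + g‖) ^ 2 := sq_nonneg _
    have hmul : α * (inner ℝ v (x - x') : ℝ) ≤ α * (‖v + g‖ * ‖x - x'‖) := by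
      exact mul_le_mul_of_nonneg_left h4 hα.le
    show α * (inner ℝ v (x - x') : ℝ) - μ / 2 * ‖x - x'‖ ^ 2 ≤ α ^ 2 / (2 * μ) * ‖v + g‖ ^ 2
    rw [div_mul_eq_mul_div (α ^ 2) (2 * μ) (‖v + g‖ ^ 2),
      le_div_iff₀ (by positivity : (0:ℝ) < 2 * μ)]
    nlinarith [hmul, hsq, hμ, mul_le_mul_of_nonneg_left hmul (by positivity : (0:ℝ) ≤ 2 * μ)]
  have hne : ((fun g => ‖v + g‖ ^ 2) '' normalCone X x).Nonempty := ⟨_, 0, h0, rfl⟩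
  have hc : (0:ℝ) < α ^ 2 / (2 * μ) := by positivity
  have hlb : 2 * μ / α ^ 2 * A ≤ sInf ((fun g => ‖v + g‖ ^ 2) '' normalCone X x) := by
    apply le_csInf hne
    rintro _ ⟨g, hg, rfl⟩
    have h := key g hg
    show 2 * μ / α ^ 2 * A ≤ ‖v + g‖ ^ 2
    rw [div_mul_eq_mul_div, div_le_iff₀ (by positivity : (0:ℝ) < α ^ 2)]
    rw [div_mul_eq_mul_div, le_div_iff₀ (by positivity : (0:ℝ) < 2 * μ)] at h
    nlinarith [h]
  have := mul_le_mul_of_nonneg_left hlb hc.le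
  calc A = α ^ 2 / (2 * μ) * (2 * μ / α ^ 2 * A) := by field_simp
    _ ≤ _ := this
end

section
/- Let X ⊆ ℝⁿ be convex and compact, f : ℝⁿ → ℝ be L-smooth and satisfy the KŁ condition on X with constant μ > 0. The projected gradient descent iterates x_{k+1} = Proj_X(x_k - (1/L)∇f(x_k)) satisfy f(x_k) - f* ≤ (1 - μ/(4L + μ))^k · (f(x_0) - f*), where f* = min_{x∈X} f(x). -/
set_option maxHeartbeats 1000000

open Set

section aux

variable {E : Type*} [NormedAddCommGroup E] [InnerProductSpace ℝ E] [CompleteSpace E]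

/-- Descent lemma for L-smooth functions. -/
lemma descent_lemma (f : E → ℝ) (f' : E → E) (L : ℝ) (hL : 0 < L)
    (hdiff : ∀ x, HasGradientAt f (f' x) x)
    (hlip : ∀ x y, ‖f' x - f' y‖ ≤ L * ‖x - y‖) (a b : E) :
    f b ≤ f a + inner ℝ (f' a) (b - a) + L / 2 * ‖b - a‖ ^ 2 := by
  set d := b - a with hd
  -- auxiliary function
  set g : ℝ → ℝ := fun t => f (a + t • d) - t * inner ℝ (f' a) d - L / 2 * t ^ 2 * ‖d‖ ^ 2 with hg
  have hline : ∀ t : ℝ, HasDerivAt (fun t : ℝ => a + t • d) d t := by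
    intro t
    simpa using ((hasDerivAt_id t).smul_const d).const_add a
  have hderiv : ∀ t : ℝ, HasDerivAt g
      ((inner ℝ (f' (a + t • d)) d : ℝ) - inner ℝ (f' a) d - L * t * ‖d‖ ^ 2) t := by
    intro t
    have h1 : HasDerivAt (fun t : ℝ => f (a + t • d)) (inner ℝ (f' (a + t • d)) d : ℝ) t := by
      have := (hasGradientAt_iff_hasFDerivAt.mp (hdiff (a + t • d))).comp_hasDerivAt t (hline t)
      simp at this
      exact this
    have h2 : HasDerivAt (fun t : ℝ => t * (inner ℝ (f' a) d : ℝ)) (inner ℝ (f' a) d : ℝ) t := by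
      simpa using (hasDerivAt_id t).mul_const (inner ℝ (f' a) d : ℝ)
    have h3 : HasDerivAt (fun t : ℝ => L / 2 * t ^ 2 * ‖d‖ ^ 2) (L * t * ‖d‖ ^ 2) t := by
      have h3' := ((hasDerivAt_pow 2 t).const_mul (L / 2)).mul_const (‖d‖ ^ 2)
      refine h3'.congr_deriv ?_
      ring
    rw [hg]
    exact (h1.sub h2).sub h3
  have hmono : AntitoneOn g (Icc 0 1) := by
    apply antitoneOn_of_deriv_nonpos (convex_Icc 0 1)
    · exact (continuous_iff_continuousAt.mpr
        (fun t => (hderiv t).differentiableAt.continuousAt)).continuousOn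
    · exact fun t _ => ((hderiv t).differentiableAt).differentiableWithinAt
    · intro t ht
      rw [interior_Icc] at ht
      rw [(hderiv t).deriv]
      have h1 : (inner ℝ (f' (a + t • d)) d : ℝ) - inner ℝ (f' a) d
          = inner ℝ (f' (a + t • d) - f' a) d := by rw [inner_sub_left]
      have h2 : (inner ℝ (f' (a + t • d) - f' a) d : ℝ) ≤ L * t * ‖d‖ ^ 2 := by
        calc (inner ℝ (f' (a + t • d) - f' a) d : ℝ) ≤ ‖f' (a + t • d) - f' a‖ * ‖d‖ :=
              real_inner_le_norm _ _
          _ ≤ (L * ‖(a + t • d) - a‖) * ‖d‖ := by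
              apply mul_le_mul_of_nonneg_right (hlip _ _) (norm_nonneg _)
          _ = L * t * ‖d‖ ^ 2 := by
              rw [show (a + t • d) - a = t • d by abel, norm_smul]
              simp [abs_of_pos ht.1]; ring
      linarith [h1 ▸ h2]
  have hle := hmono (left_mem_Icc.mpr zero_le_one) (right_mem_Icc.mpr zero_le_one) zero_le_one
  simp only [hg] at hle
  have hab : a + (1 : ℝ) • d = b := by simp [hd]
  rw [hab] at hle
  simp at hle
  linarith

end aux

/-- **Linear convergence of projected gradient descent under the KŁ condition.**
If `f` is `L`-smooth and satisfies the KŁ condition on the convex compact set `X` with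
constant `μ > 0`, the projected gradient descent iterates
`x_{k+1} = Proj_X (x_k - (1/L) ∇f(x_k))` satisfy
`f x_k - f* ≤ (1 - μ/(4L + μ))^k (f x_0 - f*)`. -/
theorem projected_gradient_descent_KL_linear_rate {n : ℕ}
    (X : Set (EuclideanSpace ℝ (Fin n)))
    (hXconv : Convex ℝ X) (hXcomp : IsCompact X) (hXne : X.Nonempty)
    (f : EuclideanSpace ℝ (Fin n) → ℝ) (f' : EuclideanSpace ℝ (Fin n) → EuclideanSpace ℝ (Fin n))
    (L μ : ℝ) (hL : 0 < L) (hμ : 0 < μ)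
    (hdiff : ∀ x, HasGradientAt f (f' x) x)
    (hlip : ∀ x y, ‖f' x - f' y‖ ≤ L * ‖x - y‖)
    (hKL : ∀ x ∈ X, f x - sInf (f '' X) ≤
      1 / (2 * μ) * sInf ((fun g => ‖f' x + g‖ ^ 2) '' normalCone X x))
    (proj : EuclideanSpace ℝ (Fin n) → EuclideanSpace ℝ (Fin n))
    (hproj : ∀ y, proj y ∈ X ∧ ∀ z ∈ X, ‖y - proj y‖ ≤ ‖y - z‖)
    (x : ℕ → EuclideanSpace ℝ (Fin n)) (hx0 : x 0 ∈ X)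
    (hstep : ∀ k, x (k + 1) = proj (x k - (1 / L) • f' (x k))) :
    ∀ k, f (x k) - sInf (f '' X) ≤
      (1 - μ / (4 * L + μ)) ^ k * (f (x 0) - sInf (f '' X)) := by
  set S := sInf (f '' X) with hS
  -- projection variational inequality
  have hVI : ∀ y, ∀ z ∈ X, (inner ℝ (y - proj y) (z - proj y) : ℝ) ≤ 0 := by
    intro y
    have h1 : ‖y - proj y‖ = ⨅ w : X, ‖y - w‖ := by
      haveI : Nonempty X := hXne.to_subtype
      apply le_antisymm
      · exact le_ciInf fun w => (hproj y).2 w w.2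
      · have hbb : BddBelow (Set.range fun w : X => ‖y - (w : EuclideanSpace ℝ (Fin n))‖) := by
          refine ⟨0, ?_⟩
          rintro a ⟨w, rfl⟩
          exact norm_nonneg _
        exact ciInf_le hbb ⟨proj y, (hproj y).1⟩
    exact (norm_eq_iInf_iff_real_inner_le_zero hXconv (hproj y).1).mp h1
  -- membership of iterates
  have hmem : ∀ k, x k ∈ X := by
    intro k
    induction k with
    | zero => exact hx0
    | succ k ih => rw [hstep k]; exact (hproj _).1
  have hcont : Continuous f := by
    rw [continuous_iff_continuousAt]
    exact fun z => (hdiff z).differentiableAt.continuousAt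
  have hbdd : BddBelow (f '' X) := (hXcomp.image hcont).bddBelow
  have hSle : ∀ z ∈ X, S ≤ f z := fun z hz => csInf_le hbdd ⟨z, hz, rfl⟩
  have hρpos : (0:ℝ) < 4 * L + μ := by linarith
  -- one step inequality
  have hstep1 : ∀ k, f (x (k + 1)) - S ≤ (1 - μ / (4 * L + μ)) * (f (x k) - S) := by
    intro k
    set p := x k
    set q := x (k + 1) with hq
    have hqdef : q = proj (p - (1 / L) • f' p) := hstep k
    set d := p - q with hd
    -- VI at the projected point
    have hVIq : ∀ z ∈ X, (inner ℝ (L • d - f' p) (z - q) : ℝ) ≤ 0 := by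
      intro z hz
      have := hVI (p - (1 / L) • f' p) z hz
      rw [← hqdef] at this
      have key : L • d - f' p = L • ((p - (1 / L) • f' p) - q) := by
        have hinv : L • ((1 / L) • f' p) = f' p := by
          rw [smul_smul, mul_one_div_cancel (ne_of_gt hL), one_smul]
        rw [hd]
        simp only [smul_sub, hinv]
        abel
      rw [key, real_inner_smul_left]
      exact mul_nonpos_of_nonneg_of_nonpos hL.le this
    -- sufficient decrease
    have hdec : f q ≤ f p - L / 2 * ‖d‖ ^ 2 := by
      have h1 := descent_lemma f f' L hL hdiff hlip p q
      have h2 := hVIq p (hmem k)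
      rw [← hd, inner_sub_left, real_inner_smul_left,
        real_inner_self_eq_norm_sq] at h2
      -- h2 : L * ‖d‖ ^ 2 - inner ℝ (f' p) d ≤ 0
      have e3 : (inner ℝ (f' p) d : ℝ) = - inner ℝ (f' p) (q - p) := by
        rw [hd, show (p - q : EuclideanSpace ℝ (Fin n)) = -(q - p) by abel,
          inner_neg_right]
      have h4 : (inner ℝ (f' p) (q - p) : ℝ) ≤ -(L * ‖d‖ ^ 2) := by
        rw [e3] at h2; linarith
      have h5 : ‖q - p‖ ^ 2 = ‖d‖ ^ 2 := by
        rw [hd, show (p - q : EuclideanSpace ℝ (Fin n)) = -(q - p) by abel, norm_neg]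
      rw [h5] at h1
      linarith
    -- the normal cone element
    have hgmem : L • d - f' p ∈ normalCone X q := fun z hz => hVIq z hz
    -- bound on f' q + g
    have hnorm : ‖f' q + (L • d - f' p)‖ ≤ 2 * L * ‖d‖ := by
      have : f' q + (L • d - f' p) = (f' q - f' p) + L • d := by abel
      rw [this]
      calc ‖(f' q - f' p) + L • d‖ ≤ ‖f' q - f' p‖ + ‖L • d‖ := norm_add_le _ _
        _ ≤ L * ‖q - p‖ + L * ‖d‖ := by
            rw [norm_smul, Real.norm_eq_abs, abs_of_pos hL]
            exact add_le_add_left (hlip q p) _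
        _ = 2 * L * ‖d‖ := by
            rw [show (q - p : EuclideanSpace ℝ (Fin n)) = -(p - q) by abel, norm_neg, ← hd]
            ring
    -- KŁ bound
    have hKLq : f q - S ≤ 1 / (2 * μ) * (2 * L * ‖d‖) ^ 2 := by
      have h1 := hKL q (hmem (k + 1))
      have h2 : sInf ((fun g => ‖f' q + g‖ ^ 2) '' normalCone X q)
          ≤ ‖f' q + (L • d - f' p)‖ ^ 2 := by
        apply csInf_le
        · exact ⟨0, fun _ ⟨_, _, h⟩ => h ▸ sq_nonneg _⟩
        · exact ⟨L • d - f' p, hgmem, rfl⟩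
      have h3 : ‖f' q + (L • d - f' p)‖ ^ 2 ≤ (2 * L * ‖d‖) ^ 2 := by
        apply sq_le_sq' _ hnorm
        have := norm_nonneg (f' q + (L • d - f' p))
        nlinarith [norm_nonneg d]
      calc f q - S ≤ 1 / (2 * μ) * sInf ((fun g => ‖f' q + g‖ ^ 2) '' normalCone X q) := h1
        _ ≤ 1 / (2 * μ) * (2 * L * ‖d‖) ^ 2 := by
            apply mul_le_mul_of_nonneg_left (le_trans h2 h3)
            positivity
    -- combine
    have hcomb : f q - S ≤ 4 * L / μ * ((f p - S) - (f q - S)) := by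
      have h1 : (1:ℝ) / (2 * μ) * (2 * L * ‖d‖) ^ 2 = 2 * L ^ 2 / μ * ‖d‖ ^ 2 := by
        field_simp
      rw [h1] at hKLq
      have h2 : ‖d‖ ^ 2 ≤ 2 / L * (f p - f q) := by
        rw [div_mul_eq_mul_div, le_div_iff₀ hL]
        linarith [hdec]
      calc f q - S ≤ 2 * L ^ 2 / μ * ‖d‖ ^ 2 := hKLq
        _ ≤ 2 * L ^ 2 / μ * (2 / L * (f p - f q)) := by
            apply mul_le_mul_of_nonneg_left h2; positivity
        _ = 4 * L / μ * ((f p - S) - (f q - S)) := by field_simp; ring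
    have hrw : (1 : ℝ) - μ / (4 * L + μ) = 4 * L / (4 * L + μ) := by
      field_simp
      ring
    have hμA : μ * (f q - S) ≤ 4 * L * ((f p - S) - (f q - S)) := by
      have h := mul_le_mul_of_nonneg_left hcomb hμ.le
      have e : μ * (4 * L / μ * ((f p - S) - (f q - S)))
          = 4 * L * ((f p - S) - (f q - S)) := by
        field_simp
      linarith [e ▸ h]
    rw [hrw, div_mul_eq_mul_div, le_div_iff₀ hρpos]
    nlinarith [hμA]
  -- induction
  intro k
  induction k with
  | zero => simp
  | succ k ih =>
    have hρnn : (0:ℝ) ≤ 1 - μ / (4 * L + μ) := by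
      rw [sub_nonneg, div_le_one hρpos]; linarith
    calc f (x (k + 1)) - S ≤ (1 - μ / (4 * L + μ)) * (f (x k) - S) := hstep1 k
      _ ≤ (1 - μ / (4 * L + μ)) * ((1 - μ / (4 * L + μ)) ^ k * (f (x 0) - S)) :=
          mul_le_mul_of_nonneg_left ih hρnn
      _ = (1 - μ / (4 * L + μ)) ^ (k + 1) * (f (x 0) - S) := by ring
end

section
/- Let f : ℝⁿ → ℝ be L-smooth and X convex and closed. For the projected gradient step x_{k+1} = Proj_X(x_k - γ g) with γ = 1/L and arbitrary vector g, one has f(x_{k+1}) - f(x_k) ≤ (1/L)‖∇f(x_k) - g‖² - (L/4)‖x_{k+1} - x_k‖². -/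
set_option maxHeartbeats 1000000

open Set
open scoped InnerProductSpace

/-- Descent lemma: quadratic upper bound for functions with Lipschitz gradient. -/
lemma descent_lemma_aux {n : ℕ} (f : EuclideanSpace ℝ (Fin n) → ℝ)
    (f' : EuclideanSpace ℝ (Fin n) → EuclideanSpace ℝ (Fin n)) (L : ℝ) (hL : 0 < L)
    (hdiff : ∀ x, HasGradientAt f (f' x) x)
    (hlip : ∀ x y, ‖f' x - f' y‖ ≤ L * ‖x - y‖)
    (x y : EuclideanSpace ℝ (Fin n)) :
    f y ≤ f x + ⟪f' x, y - x⟫_ℝ + L / 2 * ‖y - x‖ ^ 2 := by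
  set d := y - x with hd
  have hline : ∀ t : ℝ, HasDerivAt (fun t : ℝ => f (x + t • d)) ⟪f' (x + t • d), d⟫_ℝ t := by
    intro t
    have h1 : HasDerivAt (fun t : ℝ => x + t • d) d t := by
      simpa using ((hasDerivAt_id t).smul_const d).const_add x
    have h2 := ((hdiff (x + t • d)).hasFDerivAt).comp_hasDerivAt t h1
    exact h2
  set φ : ℝ → ℝ := fun t => f (x + t • d) - t * ⟪f' x, d⟫_ℝ - L / 2 * t ^ 2 * ‖d‖ ^ 2 with hφ
  have hφderiv : ∀ t : ℝ, HasDerivAt φ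
      (⟪f' (x + t • d), d⟫_ℝ - ⟪f' x, d⟫_ℝ - L * t * ‖d‖ ^ 2) t := by
    intro t
    have h1 : HasDerivAt (fun t : ℝ => t * ⟪f' x, d⟫_ℝ) ⟪f' x, d⟫_ℝ t := by
      simpa using (hasDerivAt_id t).mul_const ⟪f' x, d⟫_ℝ
    have h2 : HasDerivAt (fun t : ℝ => L / 2 * t ^ 2 * ‖d‖ ^ 2) (L * t * ‖d‖ ^ 2) t := by
      have := ((hasDerivAt_pow 2 t).const_mul (L / 2)).mul_const (‖d‖ ^ 2)
      exact this.congr_deriv (by ring)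
    exact ((hline t).sub h1).sub h2
  have hanti : AntitoneOn φ (Icc 0 1) := by
    apply antitoneOn_of_deriv_nonpos (convex_Icc 0 1)
    · exact (continuous_iff_continuousAt.mpr
        fun t => (hφderiv t).differentiableAt.continuousAt).continuousOn
    · intro t ht
      exact (hφderiv t).differentiableAt.differentiableWithinAt
    · intro t ht
      rw [interior_Icc] at ht
      rw [(hφderiv t).deriv]
      have h1 : ⟪f' (x + t • d) - f' x, d⟫_ℝ ≤ L * t * ‖d‖ ^ 2 := by
        calc ⟪f' (x + t • d) - f' x, d⟫_ℝ ≤ ‖f' (x + t • d) - f' x‖ * ‖d‖ :=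
              real_inner_le_norm _ _
          _ ≤ (L * ‖(x + t • d) - x‖) * ‖d‖ := by
              gcongr; exact hlip _ _
          _ = L * (|t| * ‖d‖) * ‖d‖ := by rw [add_sub_cancel_left, norm_smul]; simp
          _ = L * |t| * ‖d‖ ^ 2 := by ring
          _ ≤ L * t * ‖d‖ ^ 2 := by
              rw [abs_of_pos ht.1]
      rw [inner_sub_left] at h1
      linarith
  have h01 := hanti (by constructor <;> norm_num) (by constructor <;> norm_num) zero_le_one
  simp only [hφ, zero_smul, add_zero, one_smul] at h01
  have : x + d = y := by rw [hd]; abel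
  rw [this] at h01
  nlinarith [h01]

/-- **Descent inequality for a projected gradient step.** If `f` is `L`-smooth, `X` is convex
and closed, `x_k ∈ X`, and `x_{k+1} = Proj_X (x_k - (1/L) g)` for an arbitrary vector `g`, then
`f x_{k+1} - f x_k ≤ (1/L) ‖∇f(x_k) - g‖² - (L/4) ‖x_{k+1} - x_k‖²`. -/
theorem projected_step_descent {n : ℕ} (X : Set (EuclideanSpace ℝ (Fin n)))
    (hXconv : Convex ℝ X) (hXclosed : IsClosed X)
    (f : EuclideanSpace ℝ (Fin n) → ℝ) (f' : EuclideanSpace ℝ (Fin n) → EuclideanSpace ℝ (Fin n))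
    (L : ℝ) (hL : 0 < L)
    (hdiff : ∀ x, HasGradientAt f (f' x) x)
    (hlip : ∀ x y, ‖f' x - f' y‖ ≤ L * ‖x - y‖)
    (g xk xk1 : EuclideanSpace ℝ (Fin n)) (hxk : xk ∈ X)
    -- `xk1` is the Euclidean projection of `xk - (1/L) g` onto `X`
    (hxk1 : xk1 ∈ X)
    (hproj : ∀ z ∈ X, ‖(xk - (1 / L) • g) - xk1‖ ≤ ‖(xk - (1 / L) • g) - z‖) :
    f xk1 - f xk ≤ 1 / L * ‖f' xk - g‖ ^ 2 - L / 4 * ‖xk1 - xk‖ ^ 2 := by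
  haveI : Nonempty X := ⟨⟨xk1, hxk1⟩⟩
  have h1 : (⨅ w : X, ‖(xk - (1 / L) • g) - (w : EuclideanSpace ℝ (Fin n))‖)
      ≤ ‖(xk - (1 / L) • g) - xk1‖ := by
    refine ciInf_le ⟨0, ?_⟩ (⟨xk1, hxk1⟩ : X)
    rintro b ⟨w, rfl⟩
    exact norm_nonneg _
  have h2 : ‖(xk - (1 / L) • g) - xk1‖
      ≤ ⨅ w : X, ‖(xk - (1 / L) • g) - (w : EuclideanSpace ℝ (Fin n))‖ :=
    le_ciInf fun w => hproj w w.2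
  have hkey : ⟪(xk - (1 / L) • g) - xk1, xk - xk1⟫_ℝ ≤ 0 :=
    (norm_eq_iInf_iff_real_inner_le_zero hXconv hxk1).mp (le_antisymm h2 h1) xk hxk
  have hgd : ⟪g, xk1 - xk⟫_ℝ ≤ -L * ‖xk1 - xk‖ ^ 2 := by
    have he : (xk - (1 / L) • g) - xk1 = -(xk1 - xk) - (1 / L) • g := by abel
    have hx : xk - xk1 = -(xk1 - xk) := by abel
    rw [he, hx, inner_sub_left, inner_neg_neg, inner_neg_right, real_inner_smul_left,
      real_inner_self_eq_norm_sq] at hkey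
    have e1 : 1 / L * ⟪g, xk1 - xk⟫_ℝ ≤ -‖xk1 - xk‖ ^ 2 := by linarith
    calc ⟪g, xk1 - xk⟫_ℝ = L * (1 / L * ⟪g, xk1 - xk⟫_ℝ) := by
          field_simp
      _ ≤ L * (-‖xk1 - xk‖ ^ 2) := mul_le_mul_of_nonneg_left e1 hL.le
      _ = -L * ‖xk1 - xk‖ ^ 2 := by ring
  have hdesc := descent_lemma_aux f f' L hL hdiff hlip xk xk1
  have hsplit : ⟪f' xk, xk1 - xk⟫_ℝ = ⟪f' xk - g, xk1 - xk⟫_ℝ + ⟪g, xk1 - xk⟫_ℝ := by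
    rw [inner_sub_left]; ring
  have hcs : ⟪f' xk - g, xk1 - xk⟫_ℝ ≤ ‖f' xk - g‖ * ‖xk1 - xk‖ := real_inner_le_norm _ _
  have hamgm : ‖f' xk - g‖ * ‖xk1 - xk‖
      ≤ 1 / L * ‖f' xk - g‖ ^ 2 + L / 4 * ‖xk1 - xk‖ ^ 2 := by
    have h := sq_nonneg (‖f' xk - g‖ - L / 2 * ‖xk1 - xk‖)
    have h2 : ‖f' xk - g‖ * ‖xk1 - xk‖ * L
        ≤ (1 / L * ‖f' xk - g‖ ^ 2 + L / 4 * ‖xk1 - xk‖ ^ 2) * L := by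
      have he : (1 / L * ‖f' xk - g‖ ^ 2 + L / 4 * ‖xk1 - xk‖ ^ 2) * L
          = ‖f' xk - g‖ ^ 2 + L ^ 2 / 4 * ‖xk1 - xk‖ ^ 2 := by
        field_simp
      rw [he]
      nlinarith [h]
    exact le_of_mul_le_mul_right h2 hL
  nlinarith [hdesc, hgd, hcs, hamgm, hsplit]
end

section
/- Let f : ℝⁿ → ℝ be L-smooth, X convex and closed, and x_{k+1} = Proj_X(x_k - (1/L)g) for some vector g. Then min_{h ∈ N_X(x_{k+1})} ‖∇f(x_{k+1}) + h‖ ≤ 2L‖x_{k+1} - x_k‖ + ‖∇f(x_k) - g‖. -/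
open Set

/-- **Stationarity-measure bound for a projected gradient step.** If `f` is `L`-smooth, `X` is
convex and closed, and `x_{k+1} = Proj_X (x_k - (1/L) g)`, then
`min_{h ∈ N_X(x_{k+1})} ‖∇f(x_{k+1}) + h‖ ≤ 2L ‖x_{k+1} - x_k‖ + ‖∇f(x_k) - g‖`. -/
theorem projected_step_stationarity {n : ℕ} (X : Set (EuclideanSpace ℝ (Fin n)))
    (hXconv : Convex ℝ X) (hXclosed : IsClosed X)
    (f : EuclideanSpace ℝ (Fin n) → ℝ) (f' : EuclideanSpace ℝ (Fin n) → EuclideanSpace ℝ (Fin n))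
    (L : ℝ) (hL : 0 < L)
    (hdiff : ∀ x, HasGradientAt f (f' x) x)
    (hlip : ∀ x y, ‖f' x - f' y‖ ≤ L * ‖x - y‖)
    (g xk xk1 : EuclideanSpace ℝ (Fin n))
    -- `xk1` is the Euclidean projection of `xk - (1/L) g` onto `X`
    (hxk1 : xk1 ∈ X)
    (hproj : ∀ z ∈ X, ‖(xk - (1 / L) • g) - xk1‖ ≤ ‖(xk - (1 / L) • g) - z‖) :
    sInf ((fun h => ‖f' xk1 + h‖) '' normalCone X xk1) ≤
      2 * L * ‖xk1 - xk‖ + ‖f' xk - g‖ := by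
  have : Nonempty X := ⟨⟨xk1, hxk1⟩⟩
  set u := xk - (1 / L) • g with hu
  have hchar : ∀ y ∈ X, (inner ℝ (u - xk1) (y - xk1) : ℝ) ≤ 0 := by
    have heq : ‖u - xk1‖ = ⨅ w : X, ‖u - w‖ := by
      refine le_antisymm (le_ciInf fun w => hproj w w.2) ?_
      exact ciInf_le ⟨0, by rintro r ⟨w, rfl⟩; positivity⟩ (⟨xk1, hxk1⟩ : X)
    exact (norm_eq_iInf_iff_real_inner_le_zero hXconv hxk1).mp heq
  set h0 := L • (u - xk1) with hh0
  have hmem : h0 ∈ normalCone X xk1 := by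
    intro y hy
    rw [hh0, real_inner_smul_left]
    have := hchar y hy
    nlinarith
  have h1 : f' xk1 + h0 = (f' xk1 - f' xk) + ((f' xk - g) + L • (xk - xk1)) := by
    rw [hh0, hu, smul_sub, smul_sub, smul_smul, mul_one_div, div_self hL.ne']
    module
  have key : ‖f' xk1 + h0‖ ≤ 2 * L * ‖xk1 - xk‖ + ‖f' xk - g‖ := by
    rw [h1]
    have h2 : ‖f' xk1 - f' xk‖ ≤ L * ‖xk1 - xk‖ := hlip xk1 xk
    have h3 : ‖L • (xk - xk1)‖ = L * ‖xk1 - xk‖ := by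
      rw [norm_smul, Real.norm_of_nonneg hL.le, norm_sub_rev]
    have h4 := norm_add_le (f' xk1 - f' xk) ((f' xk - g) + L • (xk - xk1))
    have h5 := norm_add_le (f' xk - g) (L • (xk - xk1))
    linarith
  refine (csInf_le ?_ (Set.mem_image_of_mem _ hmem)).trans key
  exact ⟨0, by rintro r ⟨w, -, rfl⟩; positivity⟩
end

section
/- Let f : ℝ → ℝ be convex with a minimizer at θ*, and let ξ be a real random variable with cumulative distribution function P. Then for any θ, E[f(ξ ∨ θ) - f(ξ ∨ θ*)] ≤ f(θ) - f(θ*), where ∨ denotes the maximum. -/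
open MeasureTheory

lemma convex_mono_left (f : ℝ → ℝ) (hf : ConvexOn ℝ Set.univ f)
    (θstar : ℝ) (hmin : ∀ y : ℝ, f θstar ≤ f y)
    {a b : ℝ} (hab : a ≤ b) (hb : b ≤ θstar) : f b ≤ f a := by
  have hseg : b ∈ segment ℝ a θstar := by
    rw [segment_eq_Icc (hab.trans hb)]
    exact ⟨hab, hb⟩
  have := hf.le_on_segment (Set.mem_univ a) (Set.mem_univ θstar) hseg
  rwa [max_eq_left (hmin a)] at this

/-- **Suboptimality gap after a max-transform.** If `f` is convex with global minimizer `θ*`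
and `ξ` is a real random variable with distribution `P`, then for any `θ`,
`E[f(ξ ∨ θ) - f(ξ ∨ θ*)] ≤ f θ - f θ*`. -/
theorem expected_max_gap_upper_bound (f : ℝ → ℝ) (hf : ConvexOn ℝ Set.univ f)
    (θstar : ℝ) (hmin : ∀ y : ℝ, f θstar ≤ f y)
    (P : Measure ℝ) [IsProbabilityMeasure P] (θ : ℝ)
    (hint₁ : Integrable (fun x => f (max x θ)) P)
    (hint₂ : Integrable (fun x => f (max x θstar)) P) :
    (∫ x, (f (max x θ) - f (max x θstar)) ∂P) ≤ f θ - f θstar := by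
  have hpt : ∀ x : ℝ, f (max x θ) - f (max x θstar) ≤ f θ - f θstar := by
    intro x
    rcases le_total x θstar with hx | hx
    · rw [max_eq_right hx]
      rcases le_total x θ with hxθ | hxθ
      · rw [max_eq_right hxθ]
      · rw [max_eq_left hxθ]
        have := convex_mono_left f hf θstar hmin hxθ hx
        linarith
    · rw [max_eq_left hx]
      rcases le_total x θ with hxθ | hxθ
      · rw [max_eq_right hxθ]
        have := hmin x
        linarith
      · rw [max_eq_left hxθ]
        have := hmin θ
        linarith
  calc (∫ x, (f (max x θ) - f (max x θstar)) ∂P)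
      ≤ ∫ _x, (f θ - f θstar) ∂P :=
        integral_mono (hint₁.sub hint₂) (integrable_const _) hpt
    _ = f θ - f θstar := by simp
end

section
/- Let f : ℝ → ℝ be convex with minimizer θ*, let ξ be a real random variable with CDF P, and suppose θ ≤ θ*. Then E[f(ξ ∨ θ) - f(ξ ∨ θ*)] ≥ P(ξ ≤ θ) · (f(θ) - f(θ*)). Consequently, if P(ξ ≤ θ) ≥ α > 0 then f(θ) - f(θ*) ≤ (1/α) · E[f(ξ ∨ θ) - f(ξ ∨ θ*)]. -/
open MeasureTheory

/-- **Lower bound on the suboptimality gap after a max-transform.** If `f` is convex with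
global minimizer `θ*`, `ξ ∼ P`, and `θ ≤ θ*`, then
`E[f(ξ ∨ θ) - f(ξ ∨ θ*)] ≥ P(ξ ≤ θ) (f θ - f θ*)`; consequently, if `P(ξ ≤ θ) ≥ α > 0` then
`f θ - f θ* ≤ (1/α) E[f(ξ ∨ θ) - f(ξ ∨ θ*)]`. -/
theorem expected_max_gap_lower_bound (f : ℝ → ℝ) (hf : ConvexOn ℝ Set.univ f)
    (θstar : ℝ) (hmin : ∀ y : ℝ, f θstar ≤ f y)
    (P : Measure ℝ) [IsProbabilityMeasure P] (θ : ℝ) (hθ : θ ≤ θstar)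
    (hint₁ : Integrable (fun x => f (max x θ)) P)
    (hint₂ : Integrable (fun x => f (max x θstar)) P) :
    (P (Set.Iic θ)).toReal * (f θ - f θstar) ≤
        ∫ x, (f (max x θ) - f (max x θstar)) ∂P ∧
      ∀ α : ℝ, 0 < α → α ≤ (P (Set.Iic θ)).toReal →
        f θ - f θstar ≤ 1 / α * ∫ x, (f (max x θ) - f (max x θstar)) ∂P := by
  set c := f θ - f θstar with hc
  have hc0 : 0 ≤ c := sub_nonneg.2 (hmin θ)
  have key : (P (Set.Iic θ)).toReal * c ≤ ∫ x, (f (max x θ) - f (max x θstar)) ∂P := by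
    have h1 : ∫ x, Set.indicator (Set.Iic θ) (fun _ => c) x ∂P
        = (P (Set.Iic θ)).toReal * c := by
      rw [integral_indicator_const _ measurableSet_Iic, smul_eq_mul]
      rfl
    rw [← h1]
    apply integral_mono
    · exact (integrable_const c).indicator measurableSet_Iic
    · exact hint₁.sub hint₂
    · intro x
      dsimp only
      by_cases hx : x ≤ θ
      · rw [Set.indicator_of_mem (by exact hx : x ∈ Set.Iic θ)]
        rw [max_eq_right hx, max_eq_right (hx.trans hθ)]
      · rw [Set.indicator_of_notMem (by exact hx : x ∉ Set.Iic θ)]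
        rcases le_total x θstar with h | h
        · rw [max_eq_right h]
          exact sub_nonneg.2 (hmin _)
        · rw [max_eq_left h, max_eq_left ((hθ.trans h))]
          simp
  refine ⟨key, fun α hα hαP => ?_⟩
  have h2 : α * c ≤ ∫ x, (f (max x θ) - f (max x θstar)) ∂P :=
    le_trans (mul_le_mul_of_nonneg_right hαP hc0) key
  rw [one_div, inv_mul_eq_div, le_div_iff₀ hα]
  linarith [h2]
end

section
/- Let f : ℝ → ℝ be convex with minimizer θ*, and let c(y, x) = k(y-x)⁺ + q(x-y)⁺ with k + q ≥ 0 be the two-sided transaction cost. Define f̲(y) = ky + f(y) and f̄(y) = -qy + f(y), both convex, with minimizers θ̲* ≤ θ̄*. Then for any θ̲ ≤ θ̄ and any random variable s with CDF ρ: E[c((s ∨ θ̲) ∧ θ̄, s) + f((s ∨ θ̲) ∧ θ̄)] - E[c((s ∨ θ̲*) ∧ θ̄*, s) + f((s ∨ θ̲*) ∧ θ̄*)] ≤ (f̲(θ̲) - f̲(θ̲*)) + (f̄(θ̄) - f̄(θ̄*)). -/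
open MeasureTheory

private lemma cb_decomp (f : ℝ → ℝ) (k q a b s : ℝ) (hab : a ≤ b) :
    (k * max (min (max s a) b - s) 0 + q * max (s - min (max s a) b) 0) + f (min (max s a) b)
    = ((k * max s a + f (max s a)) - k * s) + ((-q * min s b + f (min s b)) + q * s) - f s := by
  rcases le_total s a with h | h
  · rw [max_eq_right h, min_eq_left hab, min_eq_left (h.trans hab),
      max_eq_left (by linarith : (0:ℝ) ≤ a - s), max_eq_right (by linarith : s - a ≤ 0)]
    ring
  · rw [max_eq_left h]
    rcases le_total s b with h2 | h2
    · rw [min_eq_left h2, max_eq_right (by linarith : s - s ≤ 0)]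
      ring
    · rw [min_eq_right h2, max_eq_right (by linarith : b - s ≤ 0),
        max_eq_left (by linarith : (0:ℝ) ≤ s - b)]
      ring

private lemma cb_between (f : ℝ → ℝ) (hf : ConvexOn ℝ Set.univ f) {a x m : ℝ}
    (hax : a ≤ x) (hxm : x ≤ m) : f x ≤ max (f a) (f m) := by
  have hz : x ∈ segment ℝ a m := by
    rw [segment_eq_Icc (hax.trans hxm)]; exact ⟨hax, hxm⟩
  exact hf.le_on_segment (Set.mem_univ a) (Set.mem_univ m) hz

private lemma cb_max_mono (g : ℝ → ℝ) (hg : ConvexOn ℝ Set.univ g) {m : ℝ}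
    (hmin : ∀ y, g m ≤ g y) (a s : ℝ) : g (max s a) - g (max s m) ≤ g a - g m := by
  rcases le_total s a with h | h
  · rw [max_eq_right h]
    rcases le_total s m with h2 | h2
    · rw [max_eq_right h2]
    · rw [max_eq_left h2]
      have := hmin s; linarith
  · rw [max_eq_left h]
    rcases le_total s m with h2 | h2
    · rw [max_eq_right h2]
      have h3 := cb_between g hg h h2
      rw [max_eq_left (hmin a)] at h3
      have := hmin s
      linarith
    · rw [max_eq_left h2]
      have := hmin a
      linarith

private lemma cb_min_mono (g : ℝ → ℝ) (hg : ConvexOn ℝ Set.univ g) {m : ℝ}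
    (hmin : ∀ y, g m ≤ g y) (b s : ℝ) : g (min s b) - g (min s m) ≤ g b - g m := by
  rcases le_total s b with h | h
  · rw [min_eq_left h]
    rcases le_total s m with h2 | h2
    · rw [min_eq_left h2]
      have := hmin b
      linarith
    · rw [min_eq_right h2]
      have h3 := cb_between g hg h2 h
      rw [max_eq_right (hmin b)] at h3
      have := hmin s
      linarith
  · rw [min_eq_right h]
    rcases le_total s m with h2 | h2
    · rw [min_eq_left h2]
      have := hmin s; linarith
    · rw [min_eq_right h2]

/-- **Single-period suboptimality bound for the stochastic cash balance problem.**
With transaction cost `c(y, x) = k(y-x)⁺ + q(x-y)⁺` (`k + q ≥ 0`), convex `f`, and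
`f̲(y) = ky + f(y)`, `f̄(y) = -qy + f(y)` minimized at `θ̲* ≤ θ̄*`, for any `θ̲ ≤ θ̄` and
random state `s ∼ ρ`:
`E[c((s∨θ̲)∧θ̄, s) + f((s∨θ̲)∧θ̄)] - E[c((s∨θ̲*)∧θ̄*, s) + f((s∨θ̲*)∧θ̄*)]
  ≤ (f̲(θ̲) - f̲(θ̲*)) + (f̄(θ̄) - f̄(θ̄*))`. -/
theorem cash_balance_gap_bound (f : ℝ → ℝ) (hf : ConvexOn ℝ Set.univ f)
    (k q : ℝ) (hkq : 0 ≤ k + q)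
    (θl θu θls θus : ℝ) (hθ : θl ≤ θu) (hθs : θls ≤ θus)
    (hminl : ∀ y : ℝ, k * θls + f θls ≤ k * y + f y)
    (hminu : ∀ y : ℝ, -q * θus + f θus ≤ -q * y + f y)
    (ρ : Measure ℝ) [IsProbabilityMeasure ρ]
    (hint₁ : Integrable (fun s =>
      (k * max (min (max s θl) θu - s) 0 + q * max (s - min (max s θl) θu) 0) +
        f (min (max s θl) θu)) ρ)
    (hint₂ : Integrable (fun s =>
      (k * max (min (max s θls) θus - s) 0 + q * max (s - min (max s θls) θus) 0) +
        f (min (max s θls) θus)) ρ) :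
    (∫ s, ((k * max (min (max s θl) θu - s) 0 + q * max (s - min (max s θl) θu) 0) +
        f (min (max s θl) θu)) ∂ρ) -
      (∫ s, ((k * max (min (max s θls) θus - s) 0 + q * max (s - min (max s θls) θus) 0) +
        f (min (max s θls) θus)) ∂ρ) ≤
      ((k * θl + f θl) - (k * θls + f θls)) + ((-q * θu + f θu) - (-q * θus + f θus)) := by
  set C : ℝ := ((k * θl + f θl) - (k * θls + f θls)) + ((-q * θu + f θu) - (-q * θus + f θus))
    with hC
  have hfl : ConvexOn ℝ Set.univ (fun y => k * y + f y) := by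
    refine ConvexOn.add ⟨convex_univ, ?_⟩ hf
    intro x _ y _ a b _ _ _
    simp only [smul_eq_mul]
    apply le_of_eq; ring
  have hfu : ConvexOn ℝ Set.univ (fun y => -q * y + f y) := by
    refine ConvexOn.add ⟨convex_univ, ?_⟩ hf
    intro x _ y _ a b _ _ _
    simp only [smul_eq_mul]
    apply le_of_eq; ring
  have key : ∀ s : ℝ,
      ((k * max (min (max s θl) θu - s) 0 + q * max (s - min (max s θl) θu) 0) +
        f (min (max s θl) θu)) -
      ((k * max (min (max s θls) θus - s) 0 + q * max (s - min (max s θls) θus) 0) +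
        f (min (max s θls) θus)) ≤ C := by
    intro s
    rw [cb_decomp f k q θl θu s hθ, cb_decomp f k q θls θus s hθs]
    have h1 := cb_max_mono (fun y => k * y + f y) hfl hminl θl s
    have h2 := cb_min_mono (fun y => -q * y + f y) hfu hminu θu s
    rw [hC]; linarith
  calc (∫ s, ((k * max (min (max s θl) θu - s) 0 + q * max (s - min (max s θl) θu) 0) +
        f (min (max s θl) θu)) ∂ρ) -
      (∫ s, ((k * max (min (max s θls) θus - s) 0 + q * max (s - min (max s θls) θus) 0) +
        f (min (max s θls) θus)) ∂ρ)
      = ∫ s, (((k * max (min (max s θl) θu - s) 0 + q * max (s - min (max s θl) θu) 0) +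
        f (min (max s θl) θu)) -
      ((k * max (min (max s θls) θus - s) 0 + q * max (s - min (max s θls) θus) 0) +
        f (min (max s θls) θus))) ∂ρ := (integral_sub hint₁ hint₂).symm
    _ ≤ ∫ _, C ∂ρ := integral_mono (hint₁.sub hint₂) (integrable_const C) key
    _ = C := by simp
end
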